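/- Let P be a finite set of at least two points in ℝ³ and let (c, r) be its smallest enclosing ball (‖p − c‖ ≤ r for all p ∈ P, with r minimal). Then at least two points of P lie on the boundary sphere, i.e., the set {p ∈ P : ‖p − c‖ = r} has cardinality at least 2. -/

import Mathlib

/-- At least two support points on the boundary of the smallest
enclosing ball of a set of at least two points. -/
theorem two_support_points
    (P : Finset (EuclideanSpace ℝ (Fin 3))) (hP : 2 ≤ P.card)
    (c : EuclideanSpace ℝ (Fin 3)) (r : ℝ)
    (henc : ∀ p ∈ P, ‖p - c‖ ≤ r)
    (hmin : ∀ (c' : EuclideanSpace ℝ (Fin 3)) (r' : ℝ),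
      (∀ p ∈ P, ‖p - c'‖ ≤ r') → r ≤ r') :
    2 ≤ {p : EuclideanSpace ℝ (Fin 3) | p ∈ P ∧ ‖p - c‖ = r}.ncard := by
  classical
  set Q := P.filter (fun p => ‖p - c‖ = r) with hQ
  have hset : {p : EuclideanSpace ℝ (Fin 3) | p ∈ P ∧ ‖p - c‖ = r} = ↑Q := by
    ext p; simp [hQ]
  rw [hset, Set.ncard_coe_finset]
  by_contra hcard
  push_neg at hcard
  have hP0 : P.Nonempty := Finset.card_pos.mp (by omega)
  obtain ⟨p₀, hp₀⟩ := hP0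
  have hr0 : 0 ≤ r := le_trans (norm_nonneg _) (henc p₀ hp₀)
  have hrpos : 0 < r := by
    rcases hr0.lt_or_eq with h' | h'
    · exact h'
    · exfalso
      have hsub : P ⊆ {c} := by
        intro p hp
        have h1 := henc p hp
        rw [← h'] at h1
        have h2 : ‖p - c‖ = 0 := le_antisymm h1 (norm_nonneg _)
        have h3 : p - c = 0 := norm_eq_zero.mp h2
        simp [Finset.mem_singleton, sub_eq_zero.mp h3]
      have := Finset.card_le_card hsub
      simp at this; omega
  rcases Q.eq_empty_or_nonempty with hQe | ⟨q, hq⟩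
  · -- no support points: shrink radius to the max
    have hP0' : P.Nonempty := ⟨p₀, hp₀⟩
    set m := P.sup' hP0' (fun p => ‖p - c‖) with hm
    have hmr : m < r := by
      rw [hm, Finset.sup'_lt_iff]
      intro p hp
      rcases lt_or_eq_of_le (henc p hp) with h' | h'
      · exact h'
      · exfalso
        have : p ∈ Q := by simp [hQ, hp, h']
        simp [hQe] at this
    have := hmin c m (by intro p hp; rw [hm]; exact Finset.le_sup' (fun p => ‖p - c‖) hp)
    linarith
  · -- exactly one support point q: move center toward q
    have hqP : q ∈ P := (Finset.mem_filter.mp hq).1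
    have hqr : ‖q - c‖ = r := (Finset.mem_filter.mp hq).2
    set T := P.erase q with hT
    have hT0 : T.Nonempty := by
      rw [hT, ← Finset.card_pos, Finset.card_erase_of_mem hqP]; omega
    set m := T.sup' hT0 (fun p => ‖p - c‖) with hm
    obtain ⟨p₁, hp₁⟩ := hT0
    have hm0 : 0 ≤ m := by rw [hm]; exact le_trans (norm_nonneg _) (Finset.le_sup' (fun p => ‖p - c‖) hp₁)
    have hmr : m < r := by
      rw [hm]; refine (Finset.sup'_lt_iff ..).mpr ?_
      intro p hp
      have hpP : p ∈ P := Finset.mem_of_mem_erase hp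
      have hpq : p ≠ q := Finset.ne_of_mem_erase hp
      rcases lt_or_eq_of_le (henc p hpP) with h' | h'
      · exact h'
      · exfalso
        have hpQ : p ∈ Q := by simp [hQ, hpP, h']
        exact hpq (Finset.card_le_one.mp (by omega) p hpQ q hq)
    set t : ℝ := (r - m) / (2 * r) with ht
    have htpos : 0 < t := by rw [ht]; exact div_pos (by linarith) (by linarith)
    have hthalf : t ≤ 1 / 2 := by
      rw [ht, div_le_div_iff₀ (by linarith) (by norm_num)]
      linarith
    set c' := c + t • (q - c) with hc'
    have hkey : ∀ p ∈ P, ‖p - c'‖ ≤ (m + r) / 2 := by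
      intro p hp
      rcases eq_or_ne p q with rfl | hpq
      · have : p - c' = (1 - t) • (p - c) := by
          rw [hc']; module
        rw [this, norm_smul, hqr, Real.norm_eq_abs, abs_of_nonneg (by linarith)]
        have heq : (1 - t) * r = (m + r) / 2 := by
          rw [ht]; field_simp; ring
        linarith
      · have hpT : p ∈ T := Finset.mem_erase.mpr ⟨hpq, hp⟩
        have h1 : p - c' = (p - c) - t • (q - c) := by rw [hc']; module
        have h2 : ‖p - c'‖ ≤ ‖p - c‖ + t * ‖q - c‖ := by
          rw [h1]
          calc ‖(p - c) - t • (q - c)‖ ≤ ‖p - c‖ + ‖t • (q - c)‖ := norm_sub_le _ _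
            _ = ‖p - c‖ + t * ‖q - c‖ := by
                rw [norm_smul, Real.norm_eq_abs, abs_of_pos htpos]
        have h3 : ‖p - c‖ ≤ m := by rw [hm]; exact Finset.le_sup' (fun p => ‖p - c‖) hpT
        have h4 : t * ‖q - c‖ = (r - m) / 2 := by
          rw [hqr, ht]; field_simp
        linarith
    have := hmin c' ((m + r) / 2) hkey
    linarith
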